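/- arXiv:1906.03708 — 2 statements merged into one kernel-verified Lean document; each statement's English description precedes it below -/
import Mathlib

section
/- Variational gap bound via standard deviations: Let X > 0 be a random variable with E[X] = m and standard deviation σ_X, and let Y = log X have standard deviation σ_Y. If σ_X < m, then log m - E[log X] ≤ σ_X/(m - σ_X) + σ_Y. -/
open MeasureTheory ProbabilityTheory Real

lemma my_variance_congr {Ω : Type*} [MeasurableSpace Ω] {μ : Measure Ω} {X X' : Ω → ℝ}
    (h : X =ᵐ[μ] X') : variance X μ = variance X' μ := by
  have hm : ∫ ω, X ω ∂μ = ∫ ω, X' ω ∂μ := integral_congr_ae h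
  simp only [ProbabilityTheory.variance, ProbabilityTheory.evariance]
  congr 1
  apply lintegral_congr_ae
  filter_upwards [h] with ω hω
  rw [hω, hm]

/-- Cantelli's inequality (one-sided Chebyshev). -/
lemma my_cantelli {Ω : Type*} [MeasurableSpace Ω] (μ : Measure Ω) [IsProbabilityMeasure μ]
    {Z : Ω → ℝ} (hZ : MemLp Z 2 μ) {t : ℝ} (ht : 0 < t) :
    (μ {ω | (∫ ω, Z ω ∂μ) + t ≤ Z ω}).toReal ≤
      variance Z μ / (variance Z μ + t ^ 2) := by
  set m := ∫ ω, Z ω ∂μ with hm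
  set v := variance Z μ with hv
  have hv0 : 0 ≤ v := variance_nonneg _ _
  set l := v / t with hl
  have hl0 : 0 ≤ l := div_nonneg hv0 ht.le
  set W : Ω → ℝ := fun ω => Z ω - m + l with hWdef
  have hWmem : MemLp W 2 μ := (hZ.sub (memLp_const m)).add (memLp_const l)
  have hZint : Integrable Z μ := hZ.integrable one_le_two
  have hWmean : ∫ ω, W ω ∂μ = l := by
    have heq : ∫ ω, W ω ∂μ = ∫ ω, (Z ω - m) + l ∂μ := rfl
    rw [heq, integral_add (show Integrable (fun ω => Z ω - m) μ from
      hZint.sub (integrable_const m)) (integrable_const l),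
      integral_sub hZint (integrable_const _), integral_const, integral_const]
    simp [hm]
  have hWvar : variance W μ = v := by
    rw [hv]
    simp only [ProbabilityTheory.variance, ProbabilityTheory.evariance]
    congr 1
    apply lintegral_congr
    intro ω
    rw [hWmean]
    congr 2
    simp [hWdef, hm]
  have hWsq : ∫ ω, W ω ^ 2 ∂μ = v + l ^ 2 := by
    have h1 := variance_eq_sub hWmem
    rw [hWvar, hWmean] at h1
    have h2 : (∫ ω, (W ^ 2) ω ∂μ) = ∫ ω, W ω ^ 2 ∂μ := by
      apply integral_congr_ae
      filter_upwards with ω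
      simp
    rw [h2] at h1
    linarith
  have ha : 0 < t + l := by positivity
  have markov := mul_meas_ge_le_integral_of_nonneg
    (μ := μ) (f := fun ω => W ω ^ 2) (ae_of_all _ fun ω => sq_nonneg _)
    hWmem.integrable_sq ((t + l) ^ 2)
  rw [hWsq] at markov
  have hsubset : {ω | m + t ≤ Z ω} ⊆ {x | (t + l) ^ 2 ≤ W x ^ 2} := by
    intro ω hω
    simp only [Set.mem_setOf_eq] at hω ⊢
    have : t + l ≤ W ω := by simp only [hWdef]; linarith
    exact pow_le_pow_left₀ ha.le this 2
  have hmono : (μ {ω | m + t ≤ Z ω}).toReal ≤ (μ {x | (t + l) ^ 2 ≤ W x ^ 2}).toReal :=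
    ENNReal.toReal_mono (measure_ne_top _ _) (measure_mono hsubset)
  have hb : (μ {x | (t + l) ^ 2 ≤ W x ^ 2}).toReal ≤ (v + l ^ 2) / (t + l) ^ 2 := by
    rw [mul_comm] at markov
    rw [le_div_iff₀ (by positivity)]
    exact markov
  have halg : (v + l ^ 2) / (t + l) ^ 2 = v / (v + t ^ 2) := by
    rw [hl]
    field_simp
    ring
  calc (μ {ω | m + t ≤ Z ω}).toReal ≤ (v + l ^ 2) / (t + l) ^ 2 := le_trans hmono hb
    _ = v / (v + t ^ 2) := halg

/-- Corollary: variational gap bound via standard deviations. If `σ_X < E[X] = m`,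
then `log m - E[log X] ≤ σ_X/(m - σ_X) + σ_Y` where `Y = log X`. -/
theorem variational_gap_stddev_bound {Ω : Type*} [MeasurableSpace Ω] (μ : Measure Ω)
    [IsProbabilityMeasure μ] (X : Ω → ℝ) (hXpos : ∀ᵐ ω ∂μ, 0 < X ω)
    (hX : MemLp X 2 μ) (hY : MemLp (fun ω => Real.log (X ω)) 2 μ)
    (hσ : Real.sqrt (variance X μ) < ∫ ω, X ω ∂μ) :
    Real.log (∫ ω, X ω ∂μ) - ∫ ω, Real.log (X ω) ∂μ ≤
      Real.sqrt (variance X μ) / ((∫ ω, X ω ∂μ) - Real.sqrt (variance X μ)) +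
      Real.sqrt (variance (fun ω => Real.log (X ω)) μ) := by
  classical
  -- replace X by a measurable representative X'
  set X' : Ω → ℝ := hX.1.mk X with hX'def
  have hX'sm : StronglyMeasurable X' := hX.1.stronglyMeasurable_mk
  have hXX' : X =ᵐ[μ] X' := hX.1.ae_eq_mk
  have hYY' : (fun ω => Real.log (X ω)) =ᵐ[μ] (fun ω => Real.log (X' ω)) := by
    filter_upwards [hXX'] with ω hω; rw [hω]
  have hX' : MemLp X' 2 μ := hX.ae_eq hXX'
  have hY' : MemLp (fun ω => Real.log (X' ω)) 2 μ := hY.ae_eq hYY'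
  have hX'pos : ∀ᵐ ω ∂μ, 0 < X' ω := by
    filter_upwards [hXpos, hXX'] with ω h1 h2; rwa [h2] at h1
  have hmeq : ∫ ω, X ω ∂μ = ∫ ω, X' ω ∂μ := integral_congr_ae hXX'
  have hYeq : ∫ ω, Real.log (X ω) ∂μ = ∫ ω, Real.log (X' ω) ∂μ := integral_congr_ae hYY'
  have hvXeq : variance X μ = variance X' μ := my_variance_congr hXX'
  have hvYeq : variance (fun ω => Real.log (X ω)) μ
      = variance (fun ω => Real.log (X' ω)) μ := my_variance_congr hYY'
  rw [hvXeq] at hσ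
  rw [hmeq] at hσ
  rw [hmeq, hYeq, hvXeq, hvYeq]
  set m := ∫ ω, X' ω ∂μ with hm
  set σ := Real.sqrt (variance X' μ) with hσdef
  set EY := ∫ ω, Real.log (X' ω) ∂μ with hEY
  set σY := Real.sqrt (variance (fun ω => Real.log (X' ω)) μ) with hσY
  have hσ0 : 0 ≤ σ := Real.sqrt_nonneg _
  have hσY0 : 0 ≤ σY := Real.sqrt_nonneg _
  have hmσ : 0 < m - σ := by linarith
  have hm0 : 0 < m := by linarith
  have hvX : variance X' μ = σ ^ 2 := (Real.sq_sqrt (variance_nonneg _ _)).symm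
  have hvY : variance (fun ω => Real.log (X' ω)) μ = σY ^ 2 :=
    (Real.sq_sqrt (variance_nonneg _ _)).symm
  -- Step A: μ {ω | m - σ ≤ X' ω} ≥ 1/2 (in toReal)
  have hAmeas : MeasurableSet {ω | m - σ ≤ X' ω} :=
    measurableSet_le measurable_const hX'sm.measurable
  have hA : (1 : ℝ) / 2 ≤ (μ {ω | m - σ ≤ X' ω}).toReal := by
    have hcompl : (μ {ω | m - σ ≤ X' ω}).toReal
        = 1 - (μ {ω | X' ω < m - σ}).toReal := by
      have hce : {ω | X' ω < m - σ} = {ω | m - σ ≤ X' ω}ᶜ := by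
        ext ω; simp only [Set.mem_compl_iff, Set.mem_setOf_eq, not_le]
      rw [hce, measure_compl hAmeas (measure_ne_top _ _), measure_univ,
        ENNReal.toReal_sub_of_le prob_le_one ENNReal.one_ne_top]
      simp
    rcases eq_or_lt_of_le hσ0 with hσz | hσpos
    · -- σ = 0 : variance is 0, so μ {X' < m} = 0
      have hvz : variance X' μ = 0 := by rw [hvX, ← hσz]; ring
      have hnull : ∀ n : ℕ, μ {ω | X' ω ≤ m - 1 / (n + 1)} = 0 := by
        intro n
        have hpos : (0 : ℝ) < 1 / (n + 1 : ℝ) := by positivity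
        have hc := my_cantelli μ hX'.neg (t := 1 / (n + 1 : ℝ)) hpos
        have hvneg : variance (fun ω => -X' ω) μ = 0 := by
          have := variance_const_mul (-1) X' μ
          simp only [neg_one_mul] at this
          rw [show (fun ω => -X' ω) = (-X') from rfl] at *
          simpa [hvz] using this
        have hmneg : ∫ ω, (-X') ω ∂μ = -m := by
          simp [integral_neg, hm]
        rw [show variance (-X') μ = variance (fun ω => -X' ω) μ from rfl] at hc
        rw [hvneg, hmneg] at hc
        simp only [zero_div, zero_add] at hc
        have hset : {ω | -m + 1 / (n + 1 : ℝ) ≤ (-X') ω} = {ω | X' ω ≤ m - 1 / (n + 1)} := by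
          ext ω; simp only [Set.mem_setOf_eq, Pi.neg_apply]; constructor <;> intro h <;> linarith
        rw [hset] at hc
        have := (ENNReal.toReal_eq_zero_iff _).mp (le_antisymm hc (ENNReal.toReal_nonneg))
        rcases this with h | h
        · exact h
        · exact absurd h (measure_ne_top _ _)
      have hlt : μ {ω | X' ω < m - σ} = 0 := by
        rw [← hσz]
        have hsub : {ω | X' ω < m - 0} ⊆ ⋃ n : ℕ, {ω | X' ω ≤ m - 1 / (n + 1)} := by
          intro ω hω
          simp only [Set.mem_setOf_eq, sub_zero] at hω
          obtain ⟨n, hn⟩ := exists_nat_one_div_lt (show 0 < m - X' ω by linarith)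
          exact Set.mem_iUnion.mpr ⟨n, by simp only [Set.mem_setOf_eq]; linarith⟩
        exact measure_mono_null hsub (measure_iUnion_null hnull)
      rw [hcompl, hlt]
      norm_num
    · -- σ > 0 : Cantelli for -X' with t = σ
      have hc := my_cantelli μ hX'.neg (t := σ) hσpos
      have hvneg : variance (fun ω => -X' ω) μ = σ ^ 2 := by
        have := variance_const_mul (-1) X' μ
        simp only [neg_one_mul] at this
        rw [show (fun ω => -X' ω) = (-X') from rfl] at *
        simpa [hvX] using this
      have hmneg : ∫ ω, (-X') ω ∂μ = -m := by simp [integral_neg, hm]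
      rw [show variance (-X') μ = variance (fun ω => -X' ω) μ from rfl] at hc
      rw [hvneg, hmneg] at hc
      have hhalf : σ ^ 2 / (σ ^ 2 + σ ^ 2) = 1 / 2 := by
        rw [← two_mul]
        field_simp
      rw [hhalf] at hc
      have hset : {ω | X' ω < m - σ} ⊆ {ω | -m + σ ≤ (-X') ω} := by
        intro ω hω
        simp only [Set.mem_setOf_eq, Pi.neg_apply] at hω ⊢
        linarith
      have : (μ {ω | X' ω < m - σ}).toReal ≤ 1 / 2 :=
        le_trans (ENNReal.toReal_mono (measure_ne_top _ _) (measure_mono hset)) hc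
      rw [hcompl]
      linarith
  -- Step B: log (m - σ) ≤ EY + σY
  have hkey : Real.log (m - σ) ≤ EY + σY := by
    by_contra hcon
    push_neg at hcon
    set t := (σY + (Real.log (m - σ) - EY)) / 2 with htdef
    have ht1 : σY < t := by rw [htdef]; linarith
    have ht2 : EY + t < Real.log (m - σ) := by rw [htdef]; linarith
    have ht0 : 0 < t := lt_of_le_of_lt hσY0 ht1
    have hc := my_cantelli μ hY' ht0
    rw [hvY] at hc
    have hclt : σY ^ 2 / (σY ^ 2 + t ^ 2) < 1 / 2 := by
      rw [div_lt_iff₀ (by positivity)]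
      nlinarith [sq_nonneg σY]
    have hAB : {ω | m - σ ≤ X' ω} ≤ᵐ[μ] {ω | EY + t ≤ Real.log (X' ω)} := by
      filter_upwards [hX'pos] with ω hpos
      intro hω
      have hω' : m - σ ≤ X' ω := hω
      have hlog : Real.log (m - σ) ≤ Real.log (X' ω) := Real.log_le_log hmσ hω'
      show EY + t ≤ Real.log (X' ω)
      linarith
    have hABm : (μ {ω | m - σ ≤ X' ω}).toReal
        ≤ (μ {ω | EY + t ≤ Real.log (X' ω)}).toReal :=
      ENNReal.toReal_mono (measure_ne_top _ _) (measure_mono_ae hAB)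
    have : (1 : ℝ) / 2 < 1 / 2 := by
      calc (1 : ℝ) / 2 ≤ (μ {ω | m - σ ≤ X' ω}).toReal := hA
        _ ≤ (μ {ω | EY + t ≤ Real.log (X' ω)}).toReal := hABm
        _ ≤ σY ^ 2 / (σY ^ 2 + t ^ 2) := hc
        _ < 1 / 2 := hclt
    exact absurd this (lt_irrefl _)
  -- Step C: log m - log (m - σ) ≤ σ / (m - σ)
  have hlogstep : Real.log m - Real.log (m - σ) ≤ σ / (m - σ) := by
    have h1 : Real.log m - Real.log (m - σ) = Real.log (m / (m - σ)) := by
      rw [Real.log_div hm0.ne' hmσ.ne']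
    have h2 : Real.log (m / (m - σ)) ≤ m / (m - σ) - 1 :=
      Real.log_le_sub_one_of_pos (by positivity)
    have h3 : m / (m - σ) - 1 = σ / (m - σ) := by field_simp; ring
    linarith
  linarith
end

section
/- Monotonicity of the importance weighted lower bound: for i.i.d. positive integrable random variables W_1, W_2, ..., and L_K := E[log((W_1 + ... + W_K)/K)], one has L_M ≥ L_N whenever M ≥ N. -/
open MeasureTheory ProbabilityTheory Real Finset

lemma iwlb_map_pi {Ω : Type*} [MeasurableSpace Ω] (μ : Measure Ω) [IsProbabilityMeasure μ]
    (W : ℕ → Ω → ℝ) (hmeas : ∀ j, Measurable (W j))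
    (hindep : iIndepFun W μ)
    (hident : ∀ j, IdentDistrib (W j) (W 0) μ μ)
    {k : ℕ} (g : Fin k → ℕ) (hg : Function.Injective g) :
    μ.map (fun ω i => W (g i) ω) = Measure.pi (fun _ => μ.map (W 0)) := by
  classical
  have hP : IsProbabilityMeasure (μ.map (W 0)) :=
    Measure.isProbabilityMeasure_map (hmeas 0).aemeasurable
  have hT : Measurable (fun ω (i : Fin k) => W (g i) ω) :=
    measurable_pi_lambda _ fun i => hmeas (g i)
  refine (Measure.pi_eq fun s hs => ?_).symm
  set sets : ℕ → Set ℝ := fun j => if h : ∃ i, g i = j then s h.choose else Set.univ with hsets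
  have hsets_g : ∀ i, sets (g i) = s i := by
    intro i
    have h : ∃ i', g i' = g i := ⟨i, rfl⟩
    simp only [hsets, dif_pos h]
    exact congrArg s (hg h.choose_spec)
  have hmeas_sets : ∀ j ∈ Finset.image g Finset.univ, MeasurableSet (sets j) := by
    intro j _
    simp only [hsets]
    split_ifs with h
    · exact hs _
    · exact MeasurableSet.univ
  have hpre : (fun ω i => W (g i) ω) ⁻¹' Set.pi Set.univ s
      = ⋂ j ∈ Finset.image g Finset.univ, W j ⁻¹' sets j := by
    ext ω
    simp only [Set.mem_preimage, Set.mem_univ_pi, Set.mem_iInter, Finset.mem_image,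
      Finset.mem_univ, true_and]
    constructor
    · rintro h j ⟨i, rfl⟩
      rw [hsets_g]
      exact h i
    · intro h i
      have := h (g i) ⟨i, rfl⟩
      rwa [hsets_g] at this
  rw [Measure.map_apply hT (MeasurableSet.univ_pi hs), hpre,
    hindep.measure_inter_preimage_eq_mul _ hmeas_sets,
    Finset.prod_image (fun i _ j _ h => hg h)]
  refine Finset.prod_congr rfl fun i _ => ?_
  rw [hsets_g, ← Measure.map_apply (hmeas (g i)) (hs i), (hident (g i)).map_eq,
    Measure.map_apply (hmeas 0) (hs i)]

lemma iwlb_sum_identDistrib {Ω : Type*} [MeasurableSpace Ω] (μ : Measure Ω)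
    [IsProbabilityMeasure μ]
    (W : ℕ → Ω → ℝ) (hmeas : ∀ j, Measurable (W j))
    (hindep : iIndepFun W μ)
    (hident : ∀ j, IdentDistrib (W j) (W 0) μ μ)
    (T : Finset ℕ) {k : ℕ} (hcard : T.card = k) :
    IdentDistrib (fun ω => ∑ j ∈ T, W j ω) (fun ω => ∑ j ∈ Finset.range k, W j ω) μ μ := by
  classical
  have hsum : Measurable (fun x : Fin k → ℝ => ∑ i, x i) :=
    Finset.measurable_sum _ fun i _ => measurable_pi_apply i
  have key : ∀ g : Fin k → ℕ, Function.Injective g →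
      μ.map (fun ω => ∑ i : Fin k, W (g i) ω)
        = (Measure.pi (fun _ : Fin k => μ.map (W 0))).map (fun x => ∑ i, x i) := by
    intro g hg
    have hT : Measurable (fun ω (i : Fin k) => W (g i) ω) :=
      measurable_pi_lambda _ fun i => hmeas (g i)
    have : (fun ω => ∑ i : Fin k, W (g i) ω)
        = (fun x : Fin k → ℝ => ∑ i, x i) ∘ (fun ω i => W (g i) ω) := rfl
    rw [this, ← Measure.map_map hsum hT,
      iwlb_map_pi μ W hmeas hindep hident g hg]
  have e : Fin k ≃ {x // x ∈ T} := (T.orderIsoOfFin hcard).toEquiv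
  have hg : Function.Injective (fun i : Fin k => ((e i : ℕ))) := by
    intro a b hab
    exact e.injective (Subtype.ext hab)
  have hTsum : (fun ω => ∑ j ∈ T, W j ω) = (fun ω => ∑ i : Fin k, W (e i) ω) := by
    funext ω
    rw [← Finset.sum_coe_sort T (fun j => W j ω)]
    exact (Fintype.sum_equiv e _ _ fun i => rfl).symm
  have hRsum : (fun ω => ∑ j ∈ Finset.range k, W j ω)
      = (fun ω => ∑ i : Fin k, W (i : ℕ) ω) := by
    funext ω
    exact Finset.sum_range fun i => W i ω
  refine ⟨?_, ?_, ?_⟩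
  · exact (Finset.measurable_sum _ fun j _ => hmeas j).aemeasurable
  · exact (Finset.measurable_sum _ fun j _ => hmeas j).aemeasurable
  · rw [hTsum, hRsum, key _ hg, key _ Fin.val_injective]

/-- Monotonicity of the importance weighted lower bound: for i.i.d. positive
integrable `W j`, `L K := E[log((W 1 + ... + W K)/K)]` is monotone in `K`. -/
theorem iwlb_monotone {Ω : Type*} [MeasurableSpace Ω] (μ : Measure Ω)
    [IsProbabilityMeasure μ] (W : ℕ → Ω → ℝ)
    (hmeas : ∀ j, Measurable (W j))
    (hpos : ∀ j, ∀ᵐ ω ∂μ, 0 < W j ω)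
    (hint : ∀ j, Integrable (W j) μ)
    (hindep : iIndepFun W μ)
    (hident : ∀ j, IdentDistrib (W j) (W 0) μ μ)
    (hlogint : ∀ K, 1 ≤ K →
      Integrable (fun ω => Real.log ((∑ j ∈ Finset.range K, W j ω) / K)) μ)
    (M N : ℕ) (hN : 1 ≤ N) (hMN : N ≤ M) :
    ∫ ω, Real.log ((∑ j ∈ Finset.range N, W j ω) / N) ∂μ ≤
    ∫ ω, Real.log ((∑ j ∈ Finset.range M, W j ω) / M) ∂μ := by
  classical
  set L : ℕ → ℝ := fun K => ∫ ω, Real.log ((∑ j ∈ Finset.range K, W j ω) / K) ∂μ with hL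
  have key : ∀ K, 1 ≤ K → L K ≤ L (K + 1) := by
    intro K hK
    set f : ℕ → Ω → ℝ :=
      fun i ω => Real.log ((∑ j ∈ (Finset.range (K + 1)).erase i, W j ω) / K) with hf
    have hu : Measurable (fun x : ℝ => Real.log (x / (K : ℝ))) :=
      Real.measurable_log.comp (measurable_id.div_const _)
    have hid : ∀ i ∈ Finset.range (K + 1),
        IdentDistrib (f i) (fun ω => Real.log ((∑ j ∈ Finset.range K, W j ω) / K)) μ μ := by
      intro i hi
      have hcard : ((Finset.range (K + 1)).erase i).card = K := by
        rw [Finset.card_erase_of_mem hi, Finset.card_range]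
        omega
      exact (iwlb_sum_identDistrib μ W hmeas hindep hident _ hcard).comp hu
    have hfint : ∀ i ∈ Finset.range (K + 1), Integrable (f i) μ :=
      fun i hi => ((hid i hi).integrable_iff).mpr (hlogint K hK)
    have hfeq : ∀ i ∈ Finset.range (K + 1), ∫ ω, f i ω ∂μ = L K :=
      fun i hi => (hid i hi).integral_eq
    have hKpos : (0 : ℝ) < K := by
      have : 1 ≤ (K : ℝ) := by exact_mod_cast hK
      linarith
    have hK1 : ((K : ℝ) + 1) ≠ 0 := by positivity
    have hae : ∀ᵐ ω ∂μ, ((K : ℝ) + 1)⁻¹ * ∑ i ∈ Finset.range (K + 1), f i ω ≤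
        Real.log ((∑ j ∈ Finset.range (K + 1), W j ω) / ((K + 1 : ℕ) : ℝ)) := by
      filter_upwards [ae_all_iff.2 hpos] with ω hω
      set S := ∑ j ∈ Finset.range (K + 1), W j ω with hS
      have jensen := (strictConcaveOn_log_Ioi.concaveOn).le_map_sum
        (t := Finset.range (K + 1)) (w := fun _ => ((K : ℝ) + 1)⁻¹)
        (p := fun i => (∑ j ∈ (Finset.range (K + 1)).erase i, W j ω) / K)
        (fun i _ => by positivity)
        (by
          rw [Finset.sum_const, Finset.card_range, nsmul_eq_mul]
          push_cast
          field_simp)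
        (fun i hi => by
          have hne : ((Finset.range (K + 1)).erase i).Nonempty := by
            rw [← Finset.card_pos, Finset.card_erase_of_mem hi, Finset.card_range]
            omega
          have hpos' : 0 < ∑ j ∈ (Finset.range (K + 1)).erase i, W j ω :=
            Finset.sum_pos (fun j _ => hω j) hne
          exact Set.mem_Ioi.2 (by positivity))
      have harg : (∑ i ∈ Finset.range (K + 1),
          ((K : ℝ) + 1)⁻¹ • ((∑ j ∈ (Finset.range (K + 1)).erase i, W j ω) / (K : ℝ)))
          = S / ((K + 1 : ℕ) : ℝ) := by
        have hsum_p : ∀ i ∈ Finset.range (K + 1),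
            ((K : ℝ) + 1)⁻¹ • ((∑ j ∈ (Finset.range (K + 1)).erase i, W j ω) / (K : ℝ))
            = ((K : ℝ) + 1)⁻¹ * ((S - W i ω) / (K : ℝ)) := by
          intro i hi
          rw [smul_eq_mul, Finset.sum_erase_eq_sub hi]
        rw [Finset.sum_congr rfl hsum_p, ← Finset.mul_sum, ← Finset.sum_div,
          Finset.sum_sub_distrib, Finset.sum_const, Finset.card_range, nsmul_eq_mul]
        push_cast
        field_simp
        ring
      calc ((K : ℝ) + 1)⁻¹ * ∑ i ∈ Finset.range (K + 1), f i ω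
          = ∑ i ∈ Finset.range (K + 1), ((K : ℝ) + 1)⁻¹ •
              Real.log ((∑ j ∈ (Finset.range (K + 1)).erase i, W j ω) / (K : ℝ)) := by
            rw [Finset.mul_sum]; rfl
        _ ≤ Real.log (∑ i ∈ Finset.range (K + 1),
              ((K : ℝ) + 1)⁻¹ • ((∑ j ∈ (Finset.range (K + 1)).erase i, W j ω) / (K : ℝ))) :=
            jensen
        _ = Real.log (S / ((K + 1 : ℕ) : ℝ)) := by rw [harg]
    have h1 : Integrable (fun ω => ((K : ℝ) + 1)⁻¹ * ∑ i ∈ Finset.range (K + 1), f i ω) μ :=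
      (integrable_finset_sum _ hfint).const_mul _
    have h2 : ∫ ω, ((K : ℝ) + 1)⁻¹ * ∑ i ∈ Finset.range (K + 1), f i ω ∂μ = L K := by
      rw [integral_const_mul, integral_finset_sum _ hfint, Finset.sum_congr rfl hfeq,
        Finset.sum_const, Finset.card_range, nsmul_eq_mul]
      push_cast
      field_simp
    have h3 := integral_mono_ae h1 (hlogint (K + 1) (by omega)) hae
    rw [h2] at h3
    exact h3
  induction M, hMN using Nat.le_induction with
  | base => exact le_refl _
  | succ m hm ih => exact ih.trans (key m (hN.trans hm))
end
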